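/- Let N ≥ 2 and consider the quotient ring G = ℚ[x,y] / (h_{N−1}(x,y), h_N(x,y)) (a model for H*(Gr(2,N); ℚ) after adjoining the Chern roots). Let (a,b) and (c,d) be pairs with N−2 ≥ a ≥ b ≥ 0, N−2 ≥ c ≥ d ≥ 0 and a+b+c+d = 2(N−2). Then in G: π_{a,b}·π_{c,d} = π_{N−2,N−2} if (c,d) = (N−2−b, N−2−a), and π_{a,b}·π_{c,d} = 0 otherwise. (This duality underlies the double-facet sphere relation S₂ and the neck cutting relation NC₂ for sl(N) foams.) -/

import Mathlib

open MvPolynomial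

/-- The complete homogeneous symmetric polynomial of degree `j` in two variables. -/
noncomputable def hpoly (j : ℕ) : MvPolynomial (Fin 2) ℚ :=
  ∑ p ∈ Finset.HasAntidiagonal.antidiagonal j, X 0 ^ p.1 * X 1 ^ p.2

/-- The two-variable Schur polynomial `π_{k,m}(x,y) = ∑_{i=m}^k x^i y^{k+m-i}`. -/
noncomputable def pitwo (k m : ℕ) : MvPolynomial (Fin 2) ℚ :=
  ∑ i ∈ Finset.Icc m k, X 0 ^ i * X 1 ^ (k + m - i)

lemma sig_ext {a b c d : ℕ} (h1 : a = c) (h2 : b = d) :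
    (⟨a, b⟩ : (_ : ℕ) × ℕ) = ⟨c, d⟩ := by subst h1; subst h2; rfl

lemma hpoly_range (j : ℕ) :
    hpoly j = ∑ i ∈ Finset.range (j + 1), X 0 ^ i * X 1 ^ (j - i) := by
  rw [hpoly, Finset.Nat.sum_antidiagonal_eq_sum_range_succ_mk]

lemma pitwo_eq (k m : ℕ) (h : m ≤ k) :
    pitwo k m = (X 0 * X 1) ^ m * hpoly (k - m) := by
  rw [pitwo, hpoly_range, Finset.mul_sum]
  rw [← Finset.Ico_add_one_right_eq_Icc, Finset.sum_Ico_eq_sum_range]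
  rw [show k + 1 - m = k - m + 1 by omega]
  refine Finset.sum_congr rfl fun i hi => ?_
  simp only [Finset.mem_range] at hi
  rw [mul_pow, show k + m - (m + i) = m + (k - m - i) by omega,
    pow_add, pow_add]
  ring

lemma hpoly_zero : hpoly 0 = 1 := by
  simp [hpoly_range]

lemma hpoly_one : hpoly 1 = X 0 + X 1 := by
  rw [hpoly_range]
  simp [Finset.sum_range_succ]
  ring

lemma hpoly_rec1 (j : ℕ) : hpoly (j + 1) = X 0 * hpoly j + X 1 ^ (j + 1) := by
  rw [hpoly_range, hpoly_range, Finset.sum_range_succ', Finset.mul_sum]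
  simp only [pow_succ, pow_zero, one_mul, Nat.sub_zero]
  congr 1
  refine Finset.sum_congr rfl fun i hi => ?_
  simp only [Finset.mem_range] at hi
  rw [show j + 1 - (i + 1) = j - i by omega]
  ring

lemma hpoly_rec1' (j : ℕ) : hpoly (j + 1) = X 1 * hpoly j + X 0 ^ (j + 1) := by
  rw [hpoly_range, hpoly_range, Finset.sum_range_succ, Finset.mul_sum]
  rw [Nat.sub_self, pow_zero, mul_one, add_comm j 1]
  congr 1
  refine Finset.sum_congr rfl fun i hi => ?_
  simp only [Finset.mem_range] at hi
  rw [show 1 + j - i = (j - i) + 1 by omega]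
  ring

lemma hpoly_rec2 (j : ℕ) :
    hpoly (j + 2) = (X 0 + X 1) * hpoly (j + 1) - X 0 * X 1 * hpoly j := by
  have h1 := hpoly_rec1 (j + 1)
  have : (X 1 : MvPolynomial (Fin 2) ℚ) ^ (j + 2)
      = X 1 * (hpoly (j + 1) - X 0 * hpoly j) := by
    rw [hpoly_rec1 j]
    ring
  rw [h1, this]
  ring

/-- Jacobi–Trudi in two variables. -/
lemma jacobi_trudi : ∀ m k : ℕ, 1 ≤ m → m ≤ k →
    pitwo k m = hpoly k * hpoly m - hpoly (k + 1) * hpoly (m - 1) := by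
  intro m
  induction m with
  | zero => intro k h; omega
  | succ m ih =>
    intro k h1 hk
    rcases Nat.eq_zero_or_pos m with hm0 | hm1
    · subst hm0
      obtain ⟨k', rfl⟩ : ∃ k', k = k' + 1 := ⟨k - 1, by omega⟩
      rw [pitwo_eq _ _ hk, show k' + 1 - (0 + 1) = k' by omega,
        show (0 : ℕ) + 1 = 1 from rfl, hpoly_one, pow_one,
        show k' + 1 + 1 = k' + 2 from rfl, hpoly_rec2 k',
        show (1 : ℕ) - 1 = 0 from rfl, hpoly_zero]
      ring
    · obtain ⟨k', rfl⟩ : ∃ k', k = k' + 1 := ⟨k - 1, by omega⟩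
      have hmk' : m ≤ k' := by omega
      have key : pitwo (k' + 1) (m + 1) = X 0 * X 1 * pitwo k' m := by
        rw [pitwo_eq _ _ hk, pitwo_eq _ _ hmk',
          show k' + 1 - (m + 1) = k' - m by omega, pow_succ]
        ring
      rw [key, ih k' hm1 hmk']
      obtain ⟨m', rfl⟩ : ∃ m', m = m' + 1 := ⟨m - 1, by omega⟩
      rw [show m' + 1 - 1 = m' by omega, show m' + 1 + 1 - 1 = m' + 1 by omega,
        show m' + 1 + 1 = m' + 2 from rfl, hpoly_rec2 m',
        show k' + 1 + 1 = k' + 2 from rfl, hpoly_rec2 k']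
      ring

/-- Pieri-type product expansion in two variables. -/
lemma pieri (a b c d : ℕ) (hba : b ≤ a) (hdc : d ≤ c) :
    pitwo a b * pitwo c d =
      ∑ m ∈ Finset.Icc (b + d) (min (a + d) (b + c)),
        pitwo (a + b + c + d - m) m := by
  have hR : ∀ m ∈ Finset.Icc (b + d) (min (a + d) (b + c)),
      pitwo (a + b + c + d - m) m
        = ∑ i ∈ Finset.Icc m (a + b + c + d - m),
            X 0 ^ i * X 1 ^ (a + b + c + d - i) := by
    intro m hm
    simp only [Finset.mem_Icc] at hm
    rw [pitwo]
    refine Finset.sum_congr rfl fun i hi => ?_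
    simp only [Finset.mem_Icc] at hi
    rw [show a + b + c + d - m + m - i = a + b + c + d - i by omega]
  rw [pitwo, pitwo, Finset.sum_mul_sum, ← Finset.sum_product',
    Finset.sum_congr rfl hR, Finset.sum_sigma']
  refine Finset.sum_nbij'
    (fun p => ⟨min (p.1 + d) (b + c + d - p.2), p.1 + p.2⟩)
    (fun q => if q.2 ≤ b + c then (q.1 - d, q.2 + d - q.1)
      else (q.2 + q.1 - (b + c + d), b + c + d - q.1)) ?_ ?_ ?_ ?_ ?_
  · rintro ⟨i, j⟩ hij
    simp only [Finset.mem_product, Finset.mem_Icc] at hij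
    simp only [Finset.mem_sigma, Finset.mem_Icc]
    omega
  · rintro ⟨m, p⟩ hmp
    simp only [Finset.mem_sigma, Finset.mem_Icc] at hmp
    simp only [Finset.mem_product, Finset.mem_Icc]
    split_ifs <;> omega
  · rintro ⟨i, j⟩ hij
    simp only [Finset.mem_product, Finset.mem_Icc] at hij
    dsimp only
    split_ifs <;> exact Prod.ext (by omega) (by omega)
  · rintro ⟨m, p⟩ hmp
    simp only [Finset.mem_sigma, Finset.mem_Icc] at hmp
    dsimp only
    split_ifs <;> exact sig_ext (by omega) (by omega)
  · rintro ⟨i, j⟩ hij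
    simp only [Finset.mem_product, Finset.mem_Icc] at hij
    dsimp only
    have h1 : a + b - i + (c + d - j) = a + b + c + d - (i + j) := by omega
    calc (X 0 : MvPolynomial (Fin 2) ℚ) ^ i * X 1 ^ (a + b - i) * (X 0 ^ j * X 1 ^ (c + d - j))
        = X 0 ^ (i + j) * X 1 ^ (a + b - i + (c + d - j)) := by
          rw [pow_add, pow_add]; ring
      _ = X 0 ^ (i + j) * X 1 ^ (a + b + c + d - (i + j)) := by rw [h1]

lemma hpoly_mem (N : ℕ) (hN : 2 ≤ N) (j : ℕ) (hj : N - 1 ≤ j) :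
    hpoly j ∈ Ideal.span {hpoly (N - 1), hpoly N} := by
  set I := Ideal.span ({hpoly (N - 1), hpoly N} : Set (MvPolynomial (Fin 2) ℚ))
  have hmem : ∀ t : ℕ, hpoly (N - 1 + t) ∈ I ∧ hpoly (N + t) ∈ I := by
    intro t
    induction t with
    | zero =>
      exact ⟨Ideal.subset_span (by simp), Ideal.subset_span (by simp)⟩
    | succ t ih =>
      constructor
      · rw [show N - 1 + (t + 1) = N + t by omega]
        exact ih.2
      · rw [show N + (t + 1) = (N - 1 + t) + 2 by omega, hpoly_rec2,
          show N - 1 + t + 1 = N + t by omega]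
        exact Ideal.sub_mem _ (Ideal.mul_mem_left _ _ ih.2)
          (Ideal.mul_mem_left _ _ ih.1)
  have := (hmem (j - (N - 1))).1
  rwa [show N - 1 + (j - (N - 1)) = j by omega] at this

lemma pitwo_mem (N : ℕ) (hN : 2 ≤ N) (k m : ℕ) (hm : m ≤ k) (hk : N - 1 ≤ k) :
    pitwo k m ∈ Ideal.span {hpoly (N - 1), hpoly N} := by
  rcases Nat.eq_zero_or_pos m with hm0 | hm1
  · subst hm0
    rw [pitwo_eq _ _ (Nat.zero_le _), pow_zero, one_mul, Nat.sub_zero]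
    exact hpoly_mem N hN k hk
  · rw [jacobi_trudi m k hm1 hm]
    exact Ideal.sub_mem _
      (Ideal.mul_mem_right _ _ (hpoly_mem N hN k hk))
      (Ideal.mul_mem_right _ _ (hpoly_mem N hN (k + 1) (by omega)))

set_option synthInstance.maxHeartbeats 1000000

/-- Duality in `G = ℚ[x,y]/(h_{N−1}, h_N)` (a model of `H*(Gr(2,N))`): for
`N−2 ≥ a ≥ b ≥ 0`, `N−2 ≥ c ≥ d ≥ 0` with `a+b+c+d = 2(N−2)`,
`π_{a,b}·π_{c,d}` equals `π_{N−2,N−2}` if `(c,d) = (N−2−b, N−2−a)` and is `0`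
otherwise (sphere relation S₂ and neck cutting NC₂). -/
theorem grassmannian_duality (N : ℕ) (hN : 2 ≤ N) (a b c d : ℕ)
    (hba : b ≤ a) (ha : a ≤ N - 2) (hdc : d ≤ c) (hc : c ≤ N - 2)
    (hsum : a + b + c + d = 2 * (N - 2)) :
    Ideal.Quotient.mk (Ideal.span {hpoly (N - 1), hpoly N}) (pitwo a b * pitwo c d)
      = if c = N - 2 - b ∧ d = N - 2 - a then
          Ideal.Quotient.mk (Ideal.span {hpoly (N - 1), hpoly N})
            (pitwo (N - 2) (N - 2))
        else 0 := by
  rw [pieri a b c d hba hdc, map_sum]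
  by_cases h : c = N - 2 - b ∧ d = N - 2 - a
  · rw [if_pos h]
    obtain ⟨hc', hd'⟩ := h
    rw [Finset.sum_eq_single_of_mem (N - 2)]
    · rw [show a + b + c + d - (N - 2) = N - 2 by omega]
    · simp only [Finset.mem_Icc]
      omega
    · intro m hm hne
      simp only [Finset.mem_Icc] at hm
      rw [Ideal.Quotient.eq_zero_iff_mem]
      exact pitwo_mem N hN _ _ (by omega) (by omega)
  · rw [if_neg h]
    refine Finset.sum_eq_zero fun m hm => ?_
    simp only [Finset.mem_Icc] at hm
    rw [Ideal.Quotient.eq_zero_iff_mem]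
    exact pitwo_mem N hN _ _ (by omega) (by omega)
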